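/- arXiv:2105.00656 — 5 statements merged into one kernel-verified Lean document; each statement's English description precedes it below -/
import Mathlib

section
/- Let ab be a segment of length l in the plane, let f be a 1-Lipschitz positive function with f(a) = P·l where A ≤ P ≤ B and B = 2αA for some α > 1 and A > 4. Then there exists a point v on the perpendicular bisector of ab with |va| = |vb| = λl for some λ > 0 such that A + 1 ≤ f(v)/(λl) ≤ B - 1. In particular, it suffices to choose the angle θ = ∠bav so that A + 2 ≤ 2P cos θ ≤ B - 2, with λ = 1/(2 cos θ). -/
open Real

/-- Existence of an off-center vertex on the perpendicular bisector of an edge `ab`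
satisfying the LFS-edge ratio constraints: if `f` is positive and 1-Lipschitz with
`f a = P * l`, `A ≤ P ≤ B`, `B = 2 * α * A`, `α > 1`, `A > 4`, then there is a point `v`
equidistant from `a` and `b` with `|va| = |vb| = λ * l`, `λ = 1/(2 cos θ)` for some
`θ = ∠ b a v` with `A + 2 ≤ 2 P cos θ ≤ B - 2`, such that `A + 1 ≤ f v / (λ * l) ≤ B - 1`. -/
theorem stmt_1 (f : EuclideanSpace ℝ (Fin 2) → ℝ)
    (hf : LipschitzWith 1 f) (hfpos : ∀ x, 0 < f x)
    (a b : EuclideanSpace ℝ (Fin 2)) (l : ℝ) (hl : l = dist a b) (hlpos : 0 < l)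
    (A B P α : ℝ) (hα : 1 < α) (hA : 4 < A) (hB : B = 2 * α * A)
    (hPA : A ≤ P) (hPB : P ≤ B) (hfa : f a = P * l) :
    ∃ (v : EuclideanSpace ℝ (Fin 2)) (lam : ℝ), 0 < lam ∧
      dist v a = lam * l ∧ dist v b = lam * l ∧
      (∃ θ ∈ Set.Ioo 0 (π / 2), θ = EuclideanGeometry.angle b a v ∧
        lam = 1 / (2 * Real.cos θ) ∧
        A + 2 ≤ 2 * P * Real.cos θ ∧ 2 * P * Real.cos θ ≤ B - 2) ∧
      A + 1 ≤ f v / (lam * l) ∧ f v / (lam * l) ≤ B - 1 := by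
  have hP4 : 4 < P := lt_of_lt_of_le hA hPA
  have hA2pos : (0:ℝ) < A + 2 := by linarith
  have hBA : A + 4 < B := by nlinarith
  set lam : ℝ := P / (A + 2) with hlam_def
  have hlam_half : 1/2 < lam := by
    rw [hlam_def, lt_div_iff₀ hA2pos]; linarith
  have hlam_pos : 0 < lam := by linarith
  set w : EuclideanSpace ℝ (Fin 2) := b - a with hw_def
  have hwl : ‖w‖ = l := by rw [hw_def, hl, dist_eq_norm, norm_sub_rev]
  set u : EuclideanSpace ℝ (Fin 2) := WithLp.toLp 2 (fun i : Fin 2 => if i = 0 then -(w 1) else w 0) with hu_def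
  have hwu : inner ℝ w u = (0:ℝ) := by
    rw [PiLp.inner_apply, Fin.sum_univ_two]
    simp [hu_def]
    ring
  have hul : ‖u‖ = l := by
    rw [← hwl, EuclideanSpace.norm_eq, EuclideanSpace.norm_eq, Fin.sum_univ_two,
      Fin.sum_univ_two]
    simp [hu_def]
    ring_nf
  set t : ℝ := Real.sqrt (lam^2 - 1/4) with ht_def
  have ht2 : t^2 = lam^2 - 1/4 := Real.sq_sqrt (by nlinarith)
  set v : EuclideanSpace ℝ (Fin 2) := a + ((1:ℝ)/2) • w + t • u with hv_def
  have hva : v - a = ((1:ℝ)/2) • w + t • u := by rw [hv_def]; abel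
  have hvb : v - b = (-(1:ℝ)/2) • w + t • u := by
    rw [hv_def, hw_def]; module
  have hnorm : ∀ (s : ℝ), ‖s • w + t • u‖ = Real.sqrt (s^2 + t^2) * l := by
    intro s
    have h1 : ‖s • w + t • u‖^2 = (s^2 + t^2) * l^2 := by
      rw [norm_add_sq_real, real_inner_smul_left, real_inner_smul_right, hwu,
        norm_smul, norm_smul, hwl, hul]
      simp [Real.norm_eq_abs, mul_pow, sq_abs]
      ring
    have hnn : (0:ℝ) ≤ s^2 + t^2 := by positivity
    have h2 : ‖s • w + t • u‖^2 = (Real.sqrt (s^2 + t^2) * l)^2 := by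
      rw [h1, mul_pow, Real.sq_sqrt hnn]
    exact (sq_eq_sq₀ (norm_nonneg _) (by positivity)).mp h2
  have hst : ∀ s : ℝ, s^2 = 1/4 → Real.sqrt (s^2 + t^2) = lam := by
    intro s hs
    rw [hs, ht2, show 1/4 + (lam^2 - 1/4) = lam^2 by ring]
    exact Real.sqrt_sq hlam_pos.le
  have hdva : dist v a = lam * l := by
    rw [dist_eq_norm, hva, hnorm, hst (1/2) (by norm_num)]
  have hdvb : dist v b = lam * l := by
    rw [dist_eq_norm, hvb, hnorm, hst (-1/2) (by norm_num)]
  have hnva : ‖((1:ℝ)/2) • w + t • u‖ = lam * l := by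
    rw [← hva, ← dist_eq_norm]; exact hdva
  -- the angle
  set θ : ℝ := Real.arccos ((A + 2) / (2 * P)) with hθ_def
  have hx1 : (A + 2) / (2 * P) < 1 := by
    rw [div_lt_one (by linarith)]; linarith
  have hx0 : 0 < (A + 2) / (2 * P) := by positivity
  have hcos : Real.cos θ = (A + 2) / (2 * P) :=
    Real.cos_arccos (by linarith) hx1.le
  have hθ0 : 0 < θ := Real.arccos_pos.mpr hx1
  have hθhalf : θ < π / 2 := Real.arccos_lt_pi_div_two.mpr hx0
  have hangle : θ = EuclideanGeometry.angle b a v := by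
    rw [EuclideanGeometry.angle, InnerProductGeometry.angle, hθ_def]
    congr 1
    have h1 : (b -ᵥ a) = w := rfl
    have h2 : (v -ᵥ a) = v - a := rfl
    rw [h1, h2, hva, inner_add_right, real_inner_smul_right, real_inner_smul_right,
      hwu, real_inner_self_eq_norm_sq, hwl, hnva]
    rw [hlam_def]
    field_simp
    ring
  have h2Pcos : 2 * P * ((A + 2) / (2 * P)) = A + 2 := by
    field_simp
  have hll : 0 < lam * l := by positivity
  have hlip : |f v - f a| ≤ lam * l := by
    have := hf.dist_le_mul v a
    rw [Real.dist_eq, hdva] at this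
    simpa using this
  rw [abs_le] at hlip
  have hPlam : (A + 2) * lam = P := by
    rw [hlam_def]; field_simp
  have hPl : P * l = (A + 2) * lam * l := by rw [hPlam]
  clear_value t v
  refine ⟨v, lam, hlam_pos, hdva, hdvb, ⟨θ, ⟨hθ0, hθhalf⟩, hangle, ?_, ?_, ?_⟩, ?_, ?_⟩
  · rw [hcos, hlam_def]
    field_simp
  · rw [hcos, h2Pcos]
  · rw [hcos, h2Pcos]; linarith
  · rw [le_div_iff₀ hll]
    linarith [hlip.1, hPl, hfa]
  · rw [div_le_iff₀ hll]
    have h4 : 0 ≤ (B - A - 4) * (lam * l) := mul_nonneg (by linarith) hll.le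
    linarith [hlip.2, hPl, hfa, h4]
end

section
/- Let triangle abc in the plane have circumcenter o and circumradius r, with shortest side ab, and suppose the triangle is skinny, i.e., r/|ab| > α for some α > 1. Let f be a 1-Lipschitz function with f(x)/|e| ≤ B for every side e and endpoint x of e, where all side lengths are at least f(x)/B at each endpoint x. If B/α ≤ B - 2, then r ≥ f(p)/B for each p ∈ {a, b, c, o}. -/
/-- A skinny triangle's circumradius is at least `f p / B` for each vertex `p` and the
circumcenter `o`: `abc` has circumcenter `o` with circumradius `r`, shortest side `ab`,
`r / |ab| > α` (skinny), `f` is 1-Lipschitz with `f x ≤ B * |e|` for every side `e` and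
endpoint `x` of `e` (i.e. every side length is at least `f x / B` at each endpoint), and
`B / α ≤ B - 2`. -/
theorem stmt_3 (f : EuclideanSpace ℝ (Fin 2) → ℝ) (hf : LipschitzWith 1 f)
    (a b c o : EuclideanSpace ℝ (Fin 2)) (r α B : ℝ) (hα : 1 < α)
    (hoa : dist o a = r) (hob : dist o b = r) (hoc : dist o c = r)
    (hab_bc : dist a b ≤ dist b c) (hab_ac : dist a b ≤ dist a c)
    (habpos : 0 < dist a b)
    (hskinny : r / dist a b > α)
    (hside : ∀ x y : EuclideanSpace ℝ (Fin 2),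
      ((x = a ∧ y = b) ∨ (x = b ∧ y = c) ∨ (x = a ∧ y = c)) →
      f x ≤ B * dist x y ∧ f y ≤ B * dist x y)
    (hBα : B / α ≤ B - 2) :
    f a / B ≤ r ∧ f b / B ≤ r ∧ f c / B ≤ r ∧ f o / B ≤ r := by
  have hα0 : (0:ℝ) < α := lt_trans one_pos hα
  have hB1 : B ≤ (B - 2) * α := (div_le_iff₀ hα0).mp hBα
  have hB : 2 < B := by nlinarith
  have hB0 : (0:ℝ) < B := by linarith
  have hr1 : α * dist a b < r := (lt_div_iff₀ habpos).mp hskinny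
  have hr0 : 0 < r := lt_trans (by positivity) hr1
  have hab := hside a b (Or.inl ⟨rfl, rfl⟩)
  -- f a ≤ B * dist a b, f b ≤ B * dist a b
  have hfa : f a ≤ B * dist a b := hab.1
  have hfb : f b ≤ B * dist a b := hab.2
  -- Lipschitz bounds
  have hlc := hf.dist_le_mul c a
  have hlo := hf.dist_le_mul o a
  rw [NNReal.coe_one, one_mul, Real.dist_eq] at hlc hlo
  have hca : dist c a ≤ 2 * r := by
    have := dist_triangle c o a
    rw [dist_comm c o, hoc, hoa] at this
    linarith
  have hfc : f c ≤ f a + 2 * r := by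
    have h1 : f c - f a ≤ |f c - f a| := le_abs_self _
    linarith
  have hfo : f o ≤ f a + r := by
    have h1 : f o - f a ≤ |f o - f a| := le_abs_self _
    have hor : dist a o = r := (dist_comm a o).trans hoa
    linarith
  -- key: B * dist a b < B * (r / α), and B * (r/α) + 2r ≤ B * r
  have hkey : B * dist a b ≤ (B - 2) * r := by
    have h2 : B * (α * dist a b) ≤ B * r := by nlinarith
    nlinarith
  refine ⟨?_, ?_, ?_, ?_⟩ <;> rw [div_le_iff₀ hB0] <;> nlinarith
end

section
/- Let ω > 1, B > 0, Γ ≥ 1, 1 ≤ λ < ω, and n ≥ 1. Then (Γ/λ)·(B/ωⁿ + ∑_{k=1}^{n} 1/ω^k + 1 + λ) ≤ Γ·(B + ω/(ω-1) + 1). Hence the LFS-edge ratio of every vertex inserted by the advancing-front volume refinement is bounded by Γ·(B** + ω*/(ω*-1) + 1), and the algorithm terminates with a graded mesh. -/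
open Finset

/-- Grading bound for the 3D advancing-front volume refinement: for `ω > 1`, `B > 0`,
`Γ ≥ 1`, `1 ≤ λ < ω`, and `n ≥ 1`,
`(Γ/λ) (B/ωⁿ + ∑_{k=1}^{n} 1/ω^k + 1 + λ) ≤ Γ (B + ω/(ω-1) + 1)`,
so the LFS-edge ratio of every inserted vertex is bounded. -/
theorem stmt_8 (ω B Γ lam : ℝ) (n : ℕ)
    (hω : 1 < ω) (hB : 0 < B) (hΓ : 1 ≤ Γ) (hlam : 1 ≤ lam) (hlamω : lam < ω)
    (hn : 1 ≤ n) :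
    (Γ / lam) * (B / ω ^ n + (∑ k ∈ Finset.Icc 1 n, 1 / ω ^ k) + 1 + lam)
      ≤ Γ * (B + ω / (ω - 1) + 1) := by
  have hω0 : (0:ℝ) < ω := lt_trans one_pos hω
  have hlam0 : (0:ℝ) < lam := lt_of_lt_of_le one_pos hlam
  have hω1 : (0:ℝ) < ω - 1 := by linarith
  set r : ℝ := 1 / ω with hr
  have hr0 : 0 < r := by positivity
  have hr1 : r < 1 := by rw [hr, div_lt_one hω0]; exact hω
  -- bound the geometric sum by 1/(ω-1)
  have hsum : (∑ k ∈ Finset.Icc 1 n, 1 / ω ^ k) ≤ 1 / (ω - 1) := by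
    have h1 : (∑ k ∈ Finset.Icc 1 n, 1 / ω ^ k) = ∑ i ∈ Finset.range n, r ^ (1 + i) := by
      rw [← Finset.Ico_add_one_right_eq_Icc, Finset.sum_Ico_eq_sum_range]
      simp [hr, div_pow]
    have h2 : (∑ i ∈ Finset.range n, r ^ (1 + i)) = r * ∑ i ∈ Finset.range n, r ^ i := by
      rw [Finset.mul_sum]
      exact Finset.sum_congr rfl fun i _ => by rw [pow_add, pow_one]
    have h3 : (∑ i ∈ Finset.range n, r ^ i) ≤ (1 - r)⁻¹ := by
      rw [geom_sum_eq (ne_of_lt hr1)]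
      have hrn : 0 ≤ r ^ n := by positivity
      rw [div_le_iff_of_neg (by linarith : r - 1 < 0)]
      have : (1 - r)⁻¹ * (r - 1) = -1 := by
        field_simp
        rw [div_eq_iff (by linarith : (1:ℝ) - r ≠ 0)]
        ring
      rw [this]; linarith
    have h4 : r * (1 - r)⁻¹ = 1 / (ω - 1) := by
      rw [hr]
      field_simp
    calc (∑ k ∈ Finset.Icc 1 n, 1 / ω ^ k) = r * ∑ i ∈ Finset.range n, r ^ i := by
          rw [h1, h2]
      _ ≤ r * (1 - r)⁻¹ := by
          exact mul_le_mul_of_nonneg_left h3 (le_of_lt hr0)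
      _ = 1 / (ω - 1) := h4
  have hsum0 : 0 ≤ (∑ k ∈ Finset.Icc 1 n, 1 / ω ^ k) :=
    Finset.sum_nonneg fun k _ => by positivity
  set S := (∑ k ∈ Finset.Icc 1 n, 1 / ω ^ k)
  have hpow : B / ω ^ n ≤ B := by
    rw [div_le_iff₀ (by positivity)]
    nlinarith [one_le_pow₀ (le_of_lt hω) (n := n)]
  have hΓ0 : (0:ℝ) < Γ := lt_of_lt_of_le one_pos hΓ
  have key : (B / ω ^ n + S + 1 + lam) / lam ≤ B + ω / (ω - 1) + 1 := by
    rw [div_le_iff₀ hlam0]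
    have hfrac : ω / (ω - 1) = 1 / (ω - 1) + 1 := by field_simp; ring
    have hpow0 : 0 < B / ω ^ n := by positivity
    nlinarith [mul_le_mul_of_nonneg_left hpow (le_of_lt hlam0)]
  calc (Γ / lam) * (B / ω ^ n + S + 1 + lam)
      = Γ * ((B / ω ^ n + S + 1 + lam) / lam) := by ring
    _ ≤ Γ * (B + ω / (ω - 1) + 1) :=
        mul_le_mul_of_nonneg_left key (le_of_lt hΓ0)
end

section
/- Suppose a segment is subdivided at points M(k·T/n) for k = 0, …, n, where M solves M'(t) = f(M(t)) with f positive and 1-Lipschitz, and T is chosen so M(T) is the right endpoint. If p = M(kT/n) is a subdivision vertex and l_p is the length of an adjacent subsegment, then the ratio f(p)/l_p satisfies n/T - 1 ≤ f(p)/l_p ≤ n/T + 1. -/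
private lemma deriv_bound_aux (M : ℝ → ℝ) (g : ℝ → ℝ) (a b : ℝ) (hab : a ≤ b)
    (hg : ∀ t, HasDerivAt M (g t) t) (C : ℝ) (hC : ∀ t ∈ Set.Icc a b, g t ≤ C) :
    M b - M a ≤ C * (b - a) := by
  have hmono : MonotoneOn (fun t => C * t - M t) (Set.Icc a b) := by
    apply monotoneOn_of_deriv_nonneg (convex_Icc a b)
    · have hd : Differentiable ℝ M := fun t => (hg t).differentiableAt
      exact (Continuous.sub (continuous_const.mul continuous_id) hd.continuous).continuousOn
    · intro t _
      have hg' : HasDerivAt (fun t => C * t - M t) (C - g t) t := by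
        have h := ((hasDerivAt_id t).const_mul C).sub (hg t); simp only [mul_one] at h; exact h
      exact hg'.differentiableAt.differentiableWithinAt
    · intro t ht
      have hg' : HasDerivAt (fun t => C * t - M t) (C - g t) t := by
        have h := ((hasDerivAt_id t).const_mul C).sub (hg t); simp only [mul_one] at h; exact h
      rw [hg'.deriv]
      have := hC t (interior_subset ht)
      linarith
  have := hmono (Set.left_mem_Icc.2 hab) (Set.right_mem_Icc.2 hab) hab
  simp only at this
  linarith

/-- LFS-edge ratio bounds for the 1D LFS-based refinement (Lemma 1): if a segment is
subdivided at the points `M (k·T/n)`, `k = 0, …, n`, where `M` solves `M' t = f (M t)`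
with `f` positive and 1-Lipschitz, then for every subsegment
`[M (k·T/n), M ((k+1)·T/n)]` of length `l` and either endpoint `p` of the subsegment,
`n/T - 1 ≤ f p / l ≤ n/T + 1`. -/
theorem stmt_11 (f : ℝ → ℝ) (hfpos : ∀ x, 0 < f x) (hf : LipschitzWith 1 f)
    (M : ℝ → ℝ) (hM : ∀ t, HasDerivAt M (f (M t)) t)
    (T : ℝ) (hT : 0 < T) (n : ℕ) (hn : 1 ≤ n) :
    ∀ k : ℕ, k < n →
      ∀ p : ℝ, (p = M ((k : ℝ) * T / n) ∨ p = M (((k : ℝ) + 1) * T / n)) →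
        (n : ℝ) / T - 1 ≤ f p / (M (((k : ℝ) + 1) * T / n) - M ((k : ℝ) * T / n)) ∧
        f p / (M (((k : ℝ) + 1) * T / n) - M ((k : ℝ) * T / n)) ≤ (n : ℝ) / T + 1 := by
  intro k hk p hp
  have hn0 : (0:ℝ) < n := by exact_mod_cast Nat.lt_of_lt_of_le Nat.zero_lt_one hn
  set a : ℝ := (k : ℝ) * T / n with ha
  set b : ℝ := ((k : ℝ) + 1) * T / n with hb
  have hh : b - a = T / n := by rw [ha, hb, ← sub_div]; congr 1; ring
  have hTn : (0:ℝ) < T / n := div_pos hT hn0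
  have hab : a < b := by linarith
  have hMmono : StrictMono M := by
    apply strictMono_of_deriv_pos
    intro t
    rw [(hM t).deriv]
    exact hfpos _
  set l : ℝ := M b - M a with hl
  have hlpos : 0 < l := sub_pos.2 (hMmono hab)
  have hpmem : M a ≤ p ∧ p ≤ M b := by
    rcases hp with h | h
    · exact ⟨h.ge, h ▸ (hMmono hab).le⟩
    · exact ⟨h ▸ (hMmono hab).le, h.le⟩
  have hfb : ∀ t ∈ Set.Icc a b, |f (M t) - f p| ≤ l := by
    intro t ht
    have h1 : M a ≤ M t := hMmono.monotone ht.1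
    have h2 : M t ≤ M b := hMmono.monotone ht.2
    have hlip := hf.dist_le_mul (M t) p
    rw [Real.dist_eq, Real.dist_eq] at hlip
    calc |f (M t) - f p| ≤ |M t - p| := by simpa using hlip
      _ ≤ l := abs_le.2 ⟨by simp only [hl]; linarith [hpmem.1, hpmem.2],
          by simp only [hl]; linarith [hpmem.1, hpmem.2]⟩
  have up : M b - M a ≤ (f p + l) * (b - a) := by
    apply deriv_bound_aux M (fun t => f (M t)) a b hab.le hM
    intro t ht
    have := (abs_le.1 (hfb t ht)).2
    linarith
  have lo : (f p - l) * (b - a) ≤ M b - M a := by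
    have := deriv_bound_aux (fun t => -M t) (fun t => -(f (M t))) a b hab.le
      (fun t => (hM t).neg) (-(f p - l)) ?_
    · simp only [neg_mul] at this; linarith
    · intro t ht
      have := (abs_le.1 (hfb t ht)).1
      show -(f (M t)) ≤ -(f p - l)
      linarith
  rw [hh] at up lo
  have hcancel : (T / n) * ((n:ℝ) / T) = 1 := by field_simp
  have h1 : l * ((n:ℝ) / T) ≤ f p + l := by
    have := mul_le_mul_of_nonneg_right up (div_pos hn0 hT).le
    rw [mul_assoc, hcancel, mul_one] at this
    exact this
  have h2 : f p - l ≤ l * ((n:ℝ) / T) := by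
    have := mul_le_mul_of_nonneg_right lo (div_pos hn0 hT).le
    rw [mul_assoc, hcancel, mul_one] at this
    exact this
  constructor
  · rw [le_div_iff₀ hlpos]
    nlinarith
  · rw [div_le_iff₀ hlpos]
    nlinarith
end

section
/- Let F > 0, d > 0, B > 0, and φ ∈ (0, π). Consider two half-planes meeting along a line at dihedral angle φ; the distance from a point at distance at least d from the common line on one half-plane to the other half-plane is at least d·sin φ. Consequently, if (F + d)/B < d·sin φ and every triangle with all vertices at distance ≥ d from the common line has diametral-sphere radius at most (F + d)/B, then no vertex of one half-plane at distance ≥ d from the line lies inside the diametral sphere of such a triangle on the other half-plane. -/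
open Real

/-- Two half-planes in `ℝ³` meeting along a common line (direction `e`) at dihedral
angle `φ` (directions `u`, `v` orthogonal to `e` with `⟪u,v⟫ = cos φ`): a point of one
half-plane at distance at least `d` from the common line is at distance at least
`d sin φ` from every point of the other half-plane. Consequently, if
`(F + d)/B < d sin φ`, then no point of one half-plane lies inside a sphere of radius
at most `(F + d)/B` centered at a point of the other half-plane at distance at least
`d` from the common line (Gabriel's condition outside the cylindrical boundary layer). -/
theorem stmt_12 (F d B φ : ℝ) (hF : 0 < F) (hd : 0 < d) (hB : 0 < B)
    (hφ : φ ∈ Set.Ioo 0 π)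
    (e u v : EuclideanSpace ℝ (Fin 3))
    (he : ‖e‖ = 1) (hu : ‖u‖ = 1) (hv : ‖v‖ = 1)
    (hue : inner ℝ u e = (0 : ℝ)) (hve : inner ℝ v e = (0 : ℝ))
    (huv : inner ℝ u v = Real.cos φ) :
    (∀ s t s' t' : ℝ, d ≤ t → 0 ≤ t' →
        d * Real.sin φ ≤ dist (s • e + t • u) (s' • e + t' • v)) ∧
    ((F + d) / B < d * Real.sin φ →
      ∀ ρ : ℝ, ρ ≤ (F + d) / B →
        ∀ s t s' t' : ℝ, d ≤ t → 0 ≤ t' →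
          ¬ dist (s' • e + t' • v) (s • e + t • u) < ρ) := by
  have hsin : 0 ≤ Real.sin φ := Real.sin_nonneg_of_nonneg_of_le_pi hφ.1.le hφ.2.le
  have key : ∀ s t s' t' : ℝ, d ≤ t → 0 ≤ t' →
      d * Real.sin φ ≤ dist (s • e + t • u) (s' • e + t' • v) := by
    intro s t s' t' ht ht'
    have hue' : inner ℝ e u = (0 : ℝ) := by rw [real_inner_comm]; exact hue
    have hve' : inner ℝ e v = (0 : ℝ) := by rw [real_inner_comm]; exact hve
    have huv' : inner ℝ v u = Real.cos φ := by rw [real_inner_comm]; exact huv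
    have hD : dist (s • e + t • u) (s' • e + t' • v) ^ 2
        = (s - s') ^ 2 + t ^ 2 + t' ^ 2 - 2 * t * t' * Real.cos φ := by
      rw [dist_eq_norm, ← real_inner_self_eq_norm_sq]
      simp only [inner_sub_left, inner_sub_right, inner_add_left, inner_add_right,
        real_inner_smul_left, real_inner_smul_right, hue, hve, hue', hve', huv, huv',
        real_inner_self_eq_norm_sq, norm_smul, Real.norm_eq_abs, he, hu, hv, mul_pow, sq_abs]
      ring
    have hdist0 : 0 ≤ dist (s • e + t • u) (s' • e + t' • v) := dist_nonneg
    have hpyth : Real.sin φ ^ 2 + Real.cos φ ^ 2 = 1 := Real.sin_sq_add_cos_sq φ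
    nlinarith [sq_nonneg (t * Real.cos φ - t'), sq_nonneg (s - s'),
      sq_nonneg (dist (s • e + t • u) (s' • e + t' • v) - d * Real.sin φ),
      mul_nonneg hd.le hsin, sq_nonneg (Real.sin φ), mul_le_mul_of_nonneg_right ht hsin,
      sq_nonneg (t - d)]
  refine ⟨key, fun hlt ρ hρ s t s' t' ht ht' h => ?_⟩
  have := key s t s' t' ht ht'
  rw [dist_comm] at h
  linarith
end
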